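/- (Key one-batch bound) For any ε' ∈ (0,1) and number of cycles K' ≥ 1 of Osborne's cyclic algorithm starting at arbitrary u_0 ∈ ℝⁿ, there exists t ∈ {1, ..., K'} such that ‖∇φ(u_t)‖₁ / φ(u_t) ≤ ε' + 10 φ(u_0) / (ε' K' φ(u_{K'})). -/

import Mathlib

open Real Finset

noncomputable def rowSum {n : ℕ} (A : Matrix (Fin n) (Fin n) ℝ) (u : Fin n → ℝ) (j : Fin n) : ℝ :=
  ∑ i, Real.exp (u j - u i) * A j i

noncomputable def colSum {n : ℕ} (A : Matrix (Fin n) (Fin n) ℝ) (u : Fin n → ℝ) (j : Fin n) : ℝ :=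
  ∑ i, Real.exp (u i - u j) * A i j

noncomputable def potential {n : ℕ} (A : Matrix (Fin n) (Fin n) ℝ) (u : Fin n → ℝ) : ℝ :=
  ∑ i, ∑ j, Real.exp (u i - u j) * A i j

/-- One Osborne update: balance the j-th row/column pair. -/
noncomputable def osborneUpdate {n : ℕ} (A : Matrix (Fin n) (Fin n) ℝ)
    (u : Fin n → ℝ) (j : Fin n) : Fin n → ℝ :=
  Function.update u j
    (u j + (1 / 2) * (Real.log (colSum A u j) - Real.log (rowSum A u j)))

/-- One full cycle of Osborne's algorithm, updating coordinates 0, 1, ..., n-1 in order. -/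
noncomputable def osborneCycle {n : ℕ} (A : Matrix (Fin n) (Fin n) ℝ)
    (u : Fin n → ℝ) : Fin n → ℝ :=
  (List.finRange n).foldl (fun w j => osborneUpdate A w j) u

/-- End-of-cycle iterates of cyclic Osborne started at u0. -/
noncomputable def osborneIter {n : ℕ} (A : Matrix (Fin n) (Fin n) ℝ)
    (u0 : Fin n → ℝ) (k : ℕ) : Fin n → ℝ :=
  (osborneCycle A)^[k] u0

namespace OsbAux

variable {n : ℕ} {A : Matrix (Fin n) (Fin n) ℝ}

lemma rowSum_nonneg (hA : ∀ i j, 0 ≤ A i j) (u : Fin n → ℝ) (j : Fin n) :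
    0 ≤ rowSum A u j :=
  Finset.sum_nonneg fun i _ => mul_nonneg (Real.exp_pos _).le (hA _ _)

lemma colSum_nonneg (hA : ∀ i j, 0 ≤ A i j) (u : Fin n → ℝ) (j : Fin n) :
    0 ≤ colSum A u j :=
  Finset.sum_nonneg fun i _ => mul_nonneg (Real.exp_pos _).le (hA _ _)

lemma rowSum_pos (hA : ∀ i j, 0 ≤ A i j) (hrow : ∀ j : Fin n, ∃ i, A j i ≠ 0)
    (u : Fin n → ℝ) (j : Fin n) : 0 < rowSum A u j := by
  obtain ⟨i, hi⟩ := hrow j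
  exact Finset.sum_pos' (fun i _ => mul_nonneg (Real.exp_pos _).le (hA _ _))
    ⟨i, Finset.mem_univ i, mul_pos (Real.exp_pos _) ((hA j i).lt_of_ne (Ne.symm hi))⟩

lemma colSum_pos (hA : ∀ i j, 0 ≤ A i j) (hcol : ∀ j : Fin n, ∃ i, A i j ≠ 0)
    (u : Fin n → ℝ) (j : Fin n) : 0 < colSum A u j := by
  obtain ⟨i, hi⟩ := hcol j
  exact Finset.sum_pos' (fun i _ => mul_nonneg (Real.exp_pos _).le (hA _ _))
    ⟨i, Finset.mem_univ i, mul_pos (Real.exp_pos _) ((hA i j).lt_of_ne (Ne.symm hi))⟩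

lemma potential_eq_row (u : Fin n → ℝ) : potential A u = ∑ j, rowSum A u j := rfl

lemma potential_eq_col (u : Fin n → ℝ) : potential A u = ∑ j, colSum A u j :=
  Finset.sum_comm

lemma potential_nonneg (hA : ∀ i j, 0 ≤ A i j) (u : Fin n → ℝ) : 0 ≤ potential A u := by
  rw [potential_eq_row]
  exact Finset.sum_nonneg fun j _ => rowSum_nonneg hA u j

lemma potential_pos (hA : ∀ i j, 0 ≤ A i j) (hrow : ∀ j : Fin n, ∃ i, A j i ≠ 0)
    (hn : 0 < n) (u : Fin n → ℝ) : 0 < potential A u := by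
  rw [potential_eq_row]
  exact Finset.sum_pos' (fun j _ => (rowSum_nonneg hA u j))
    ⟨⟨0, hn⟩, Finset.mem_univ _, rowSum_pos hA hrow u _⟩

/-! ### generic update lemmas -/

lemma update_row_self (hdiag : ∀ i, A i i = 0) (u : Fin n → ℝ) (m : Fin n) (δ : ℝ) :
    rowSum A (Function.update u m (u m + δ)) m = Real.exp δ * rowSum A u m := by
  unfold rowSum
  rw [Finset.mul_sum]
  refine Finset.sum_congr rfl fun i _ => ?_
  rcases eq_or_ne i m with h | h
  · subst h; simp [hdiag]
  · rw [Function.update_self, Function.update_of_ne h,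
      show u m + δ - u i = δ + (u m - u i) by ring, Real.exp_add, mul_assoc]

lemma update_col_self (hdiag : ∀ i, A i i = 0) (u : Fin n → ℝ) (m : Fin n) (δ : ℝ) :
    colSum A (Function.update u m (u m + δ)) m = Real.exp (-δ) * colSum A u m := by
  unfold colSum
  rw [Finset.mul_sum]
  refine Finset.sum_congr rfl fun i _ => ?_
  rcases eq_or_ne i m with h | h
  · subst h; simp [hdiag]
  · rw [Function.update_self, Function.update_of_ne h,
      show u i - (u m + δ) = -δ + (u i - u m) by ring, Real.exp_add, mul_assoc]

lemma update_row_ne (u : Fin n → ℝ) (m : Fin n) (δ : ℝ) {j : Fin n} (hj : j ≠ m) :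
    rowSum A (Function.update u m (u m + δ)) j
      = rowSum A u j + (Real.exp (-δ) - 1) * (Real.exp (u j - u m) * A j m) := by
  unfold rowSum
  have : ∀ i : Fin n, Real.exp (Function.update u m (u m + δ) j - Function.update u m (u m + δ) i) * A j i
      = Real.exp (u j - u i) * A j i
        + (if i = m then (Real.exp (-δ) - 1) * (Real.exp (u j - u m) * A j m) else 0) := by
    intro i
    rcases eq_or_ne i m with h | h
    · rw [h, Function.update_of_ne hj, Function.update_self, if_pos rfl,
        show u j - (u m + δ) = -δ + (u j - u m) by ring, Real.exp_add]
      ring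
    · rw [Function.update_of_ne hj, Function.update_of_ne h, if_neg h, add_zero]
  rw [Finset.sum_congr rfl (fun i _ => this i), Finset.sum_add_distrib,
    Finset.sum_ite_eq' Finset.univ m, if_pos (Finset.mem_univ m)]

lemma update_col_ne (u : Fin n → ℝ) (m : Fin n) (δ : ℝ) {j : Fin n} (hj : j ≠ m) :
    colSum A (Function.update u m (u m + δ)) j
      = colSum A u j + (Real.exp δ - 1) * (Real.exp (u m - u j) * A m j) := by
  unfold colSum
  have : ∀ i : Fin n, Real.exp (Function.update u m (u m + δ) i - Function.update u m (u m + δ) j) * A i j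
      = Real.exp (u i - u j) * A i j
        + (if i = m then (Real.exp δ - 1) * (Real.exp (u m - u j) * A m j) else 0) := by
    intro i
    rcases eq_or_ne i m with h | h
    · rw [h, Function.update_of_ne hj, Function.update_self, if_pos rfl,
        show u m + δ - u j = δ + (u m - u j) by ring, Real.exp_add]
      ring
    · rw [Function.update_of_ne hj, Function.update_of_ne h, if_neg h, add_zero]
  rw [Finset.sum_congr rfl (fun i _ => this i), Finset.sum_add_distrib,
    Finset.sum_ite_eq' Finset.univ m, if_pos (Finset.mem_univ m)]

lemma sum_erase_col (hdiag : ∀ i, A i i = 0) (u : Fin n → ℝ) (m : Fin n) :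
    ∑ j ∈ Finset.univ.erase m, Real.exp (u j - u m) * A j m = colSum A u m := by
  rw [Finset.sum_erase_eq_sub (Finset.mem_univ m)]
  simp [colSum, hdiag]

lemma sum_erase_row (hdiag : ∀ i, A i i = 0) (u : Fin n → ℝ) (m : Fin n) :
    ∑ j ∈ Finset.univ.erase m, Real.exp (u m - u j) * A m j = rowSum A u m := by
  rw [Finset.sum_erase_eq_sub (Finset.mem_univ m)]
  simp [rowSum, hdiag]

lemma update_potential (hdiag : ∀ i, A i i = 0) (u : Fin n → ℝ) (m : Fin n) (δ : ℝ) :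
    potential A (Function.update u m (u m + δ))
      = potential A u + (Real.exp δ - 1) * rowSum A u m
          + (Real.exp (-δ) - 1) * colSum A u m := by
  rw [potential_eq_row, potential_eq_row,
    ← Finset.add_sum_erase Finset.univ _ (Finset.mem_univ m),
    ← Finset.add_sum_erase Finset.univ (rowSum A u) (Finset.mem_univ m)]
  rw [update_row_self hdiag u m δ]
  rw [Finset.sum_congr rfl (fun j hj => update_row_ne u m δ (Finset.ne_of_mem_erase hj)),
    Finset.sum_add_distrib, ← Finset.mul_sum, sum_erase_col hdiag u m]
  ring

end OsbAux

section Frag2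
namespace OsbAux
variable {n : ℕ} {A : Matrix (Fin n) (Fin n) ℝ}

lemma abs_mul_nonneg' (x y : ℝ) (hy : 0 ≤ y) : |x * y| = |x| * y := by
  rw [abs_mul, abs_of_nonneg hy]

lemma exp_half_log {c : ℝ} (hc : 0 < c) : Real.exp ((1/2) * Real.log c) = Real.sqrt c := by
  rw [show (1/2) * Real.log c = Real.log (Real.sqrt c) by rw [Real.log_sqrt hc.le]; ring]
  exact Real.exp_log (Real.sqrt_pos.2 hc)

lemma exp_delta {r c : ℝ} (hr : 0 < r) (hc : 0 < c) :
    Real.exp ((1/2) * (Real.log c - Real.log r)) = Real.sqrt c / Real.sqrt r := by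
  rw [mul_sub, Real.exp_sub, exp_half_log hc, exp_half_log hr]

lemma exp_neg_delta {r c : ℝ} (hr : 0 < r) (hc : 0 < c) :
    Real.exp (-((1/2) * (Real.log c - Real.log r))) = Real.sqrt r / Real.sqrt c := by
  rw [show -((1/2) * (Real.log c - Real.log r)) = (1/2) * (Real.log r - Real.log c) by ring]
  exact exp_delta hc hr

lemma div_mul_self_sqrt {r : ℝ} (hr : 0 < r) (x : ℝ) :
    x / Real.sqrt r * r = x * Real.sqrt r := by
  have hr2 : Real.sqrt r * Real.sqrt r = r := Real.mul_self_sqrt hr.le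
  have hsr : (0:ℝ) < Real.sqrt r := Real.sqrt_pos.2 hr
  rw [div_mul_eq_mul_div, div_eq_iff hsr.ne']
  linear_combination (-x) * hr2

variable (hA : ∀ i j, 0 ≤ A i j) (hdiag : ∀ i, A i i = 0)
  (hrow : ∀ j : Fin n, ∃ i, A j i ≠ 0) (hcol : ∀ j : Fin n, ∃ i, A i j ≠ 0)

lemma osb_eq (u : Fin n → ℝ) (m : Fin n) :
    osborneUpdate A u m
      = Function.update u m (u m + (1/2) * (Real.log (colSum A u m) - Real.log (rowSum A u m))) := by
  rfl

include hA hdiag hrow hcol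

lemma osb_row_self (u : Fin n → ℝ) (m : Fin n) :
    rowSum A (osborneUpdate A u m) m
      = Real.sqrt (rowSum A u m) * Real.sqrt (colSum A u m) := by
  have hr := rowSum_pos hA hrow u m
  have hc := colSum_pos hA hcol u m
  rw [osb_eq, update_row_self hdiag, exp_delta hr hc, div_mul_self_sqrt hr, mul_comm]

lemma osb_col_self (u : Fin n → ℝ) (m : Fin n) :
    colSum A (osborneUpdate A u m) m
      = Real.sqrt (rowSum A u m) * Real.sqrt (colSum A u m) := by
  have hr := rowSum_pos hA hrow u m
  have hc := colSum_pos hA hcol u m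
  rw [osb_eq, update_col_self hdiag, exp_neg_delta hr hc, div_mul_self_sqrt hc]

lemma osb_potential (u : Fin n → ℝ) (m : Fin n) :
    potential A (osborneUpdate A u m)
      = potential A u - (Real.sqrt (rowSum A u m) - Real.sqrt (colSum A u m))^2 := by
  have hr := rowSum_pos hA hrow u m
  have hc := colSum_pos hA hcol u m
  have hr2 : Real.sqrt (rowSum A u m) * Real.sqrt (rowSum A u m) = rowSum A u m :=
    Real.mul_self_sqrt hr.le
  have hc2 : Real.sqrt (colSum A u m) * Real.sqrt (colSum A u m) = colSum A u m :=
    Real.mul_self_sqrt hc.le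
  rw [osb_eq, update_potential hdiag, exp_delta hr hc, exp_neg_delta hr hc,
    sub_mul, sub_mul, div_mul_self_sqrt hr, div_mul_self_sqrt hc, one_mul, one_mul]
  linear_combination hr2 + hc2

lemma abs_rc_eq (u : Fin n → ℝ) (m : Fin n) :
    |rowSum A u m - colSum A u m|
      = |Real.sqrt (rowSum A u m) - Real.sqrt (colSum A u m)|
          * (Real.sqrt (rowSum A u m) + Real.sqrt (colSum A u m)) := by
  have hr := rowSum_pos hA hrow u m
  have hc := colSum_pos hA hcol u m
  have hr2 : Real.sqrt (rowSum A u m) * Real.sqrt (rowSum A u m) = rowSum A u m :=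
    Real.mul_self_sqrt hr.le
  have hc2 : Real.sqrt (colSum A u m) * Real.sqrt (colSum A u m) = colSum A u m :=
    Real.mul_self_sqrt hc.le
  rw [show rowSum A u m - colSum A u m
      = (Real.sqrt (rowSum A u m) - Real.sqrt (colSum A u m))
        * (Real.sqrt (rowSum A u m) + Real.sqrt (colSum A u m)) by
    linear_combination hc2 - hr2]
  rw [abs_mul, abs_of_nonneg (show (0:ℝ) ≤ Real.sqrt (rowSum A u m) + Real.sqrt (colSum A u m) by positivity)]

lemma osb_core_sum (u : Fin n → ℝ) (m : Fin n) :
    ∑ j ∈ Finset.univ.erase m,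
        (|rowSum A (osborneUpdate A u m) j - rowSum A u j|
          + |colSum A (osborneUpdate A u m) j - colSum A u j|)
      ≤ |Real.sqrt (rowSum A u m) - Real.sqrt (colSum A u m)|
          * (Real.sqrt (rowSum A u m) + Real.sqrt (colSum A u m)) := by
  have hr := rowSum_pos hA hrow u m
  have hc := colSum_pos hA hcol u m
  have hr2 : Real.sqrt (rowSum A u m) * Real.sqrt (rowSum A u m) = rowSum A u m :=
    Real.mul_self_sqrt hr.le
  have hc2 : Real.sqrt (colSum A u m) * Real.sqrt (colSum A u m) = colSum A u m :=
    Real.mul_self_sqrt hc.le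
  have hsr : (0:ℝ) < Real.sqrt (rowSum A u m) := Real.sqrt_pos.2 hr
  have hsc : (0:ℝ) < Real.sqrt (colSum A u m) := Real.sqrt_pos.2 hc
  have key : ∀ j ∈ Finset.univ.erase m,
      |rowSum A (osborneUpdate A u m) j - rowSum A u j|
        + |colSum A (osborneUpdate A u m) j - colSum A u j|
      = |Real.sqrt (rowSum A u m) / Real.sqrt (colSum A u m) - 1|
          * (Real.exp (u j - u m) * A j m)
        + |Real.sqrt (colSum A u m) / Real.sqrt (rowSum A u m) - 1|
          * (Real.exp (u m - u j) * A m j) := by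
    intro j hj
    have hjm : j ≠ m := Finset.ne_of_mem_erase hj
    rw [osb_eq, update_row_ne u m _ hjm, update_col_ne u m _ hjm,
      exp_delta hr hc, exp_neg_delta hr hc, add_sub_cancel_left, add_sub_cancel_left,
      abs_mul_nonneg' _ _ (mul_nonneg (Real.exp_pos _).le (hA j m)),
      abs_mul_nonneg' _ _ (mul_nonneg (Real.exp_pos _).le (hA m j))]
  rw [Finset.sum_congr rfl key, Finset.sum_add_distrib, ← Finset.mul_sum, ← Finset.mul_sum,
    sum_erase_col hdiag u m, sum_erase_row hdiag u m]
  have h1 : |Real.sqrt (rowSum A u m) / Real.sqrt (colSum A u m) - 1| * colSum A u m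
      = |Real.sqrt (rowSum A u m) - Real.sqrt (colSum A u m)| * Real.sqrt (colSum A u m) := by
    rw [show Real.sqrt (rowSum A u m) / Real.sqrt (colSum A u m) - 1
        = (Real.sqrt (rowSum A u m) - Real.sqrt (colSum A u m)) / Real.sqrt (colSum A u m) by
      field_simp]
    rw [abs_div, abs_of_pos hsc, div_mul_eq_mul_div, div_eq_iff hsc.ne']
    linear_combination (-|Real.sqrt (rowSum A u m) - Real.sqrt (colSum A u m)|) * hc2
  have h2 : |Real.sqrt (colSum A u m) / Real.sqrt (rowSum A u m) - 1| * rowSum A u m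
      = |Real.sqrt (rowSum A u m) - Real.sqrt (colSum A u m)| * Real.sqrt (rowSum A u m) := by
    rw [show Real.sqrt (colSum A u m) / Real.sqrt (rowSum A u m) - 1
        = (Real.sqrt (colSum A u m) - Real.sqrt (rowSum A u m)) / Real.sqrt (rowSum A u m) by
      field_simp]
    rw [abs_div, abs_of_pos hsr, abs_sub_comm, div_mul_eq_mul_div, div_eq_iff hsr.ne']
    linear_combination (-|Real.sqrt (rowSum A u m) - Real.sqrt (colSum A u m)|) * hr2
  rw [h1, h2]
  exact le_of_eq (by ring)

end OsbAux
end Frag2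

section Frag3
namespace OsbAux
variable {n : ℕ} (A : Matrix (Fin n) (Fin n) ℝ)

noncomputable def dSum : List (Fin n) → (Fin n → ℝ) → ℝ
  | [], _ => 0
  | j :: L, u => (Real.sqrt (rowSum A u j) - Real.sqrt (colSum A u j)) ^ 2
      + dSum L (osborneUpdate A u j)

noncomputable def sSum : List (Fin n) → (Fin n → ℝ) → ℝ
  | [], _ => 0
  | j :: L, u => |rowSum A u j - colSum A u j| + sSum L (osborneUpdate A u j)

noncomputable def pSum : List (Fin n) → (Fin n → ℝ) → ℝ
  | [], _ => 0
  | j :: L, u => (rowSum A u j + colSum A u j) + pSum L (osborneUpdate A u j)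

variable {A}

lemma dSum_nonneg : ∀ (L : List (Fin n)) (u : Fin n → ℝ), 0 ≤ dSum A L u
  | [], u => le_refl _
  | j :: L, u => add_nonneg (sq_nonneg _) (dSum_nonneg L _)

lemma sSum_nonneg : ∀ (L : List (Fin n)) (u : Fin n → ℝ), 0 ≤ sSum A L u
  | [], u => le_refl _
  | j :: L, u => add_nonneg (abs_nonneg _) (sSum_nonneg L _)

lemma pSum_nonneg (hA : ∀ i j, 0 ≤ A i j) :
    ∀ (L : List (Fin n)) (u : Fin n → ℝ), 0 ≤ pSum A L u
  | [], u => le_refl _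
  | j :: L, u => add_nonneg (add_nonneg (rowSum_nonneg hA u j) (colSum_nonneg hA u j))
      (pSum_nonneg hA L _)

/-- triangle helper -/
lemma abs_sub_le_helper (x y x' y' : ℝ) :
    |x' - y'| ≤ |x - y| + (|x' - x| + |y' - y|) := by
  have h1 : x' - y' = (x - y) + ((x' - x) - (y' - y)) := by ring
  calc |x' - y'| = |(x - y) + ((x' - x) - (y' - y))| := by rw [← h1]
    _ ≤ |x - y| + |(x' - x) - (y' - y)| := abs_add_le _ _
    _ ≤ |x - y| + (|x' - x| + |y' - y|) := by
        exact add_le_add le_rfl (abs_sub _ _)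

variable (hA : ∀ i j, 0 ≤ A i j) (hdiag : ∀ i, A i i = 0)
  (hrow : ∀ j : Fin n, ∃ i, A j i ≠ 0) (hcol : ∀ j : Fin n, ∃ i, A i j ≠ 0)

include hA hdiag hrow hcol

lemma potential_foldl : ∀ (L : List (Fin n)) (u : Fin n → ℝ),
    potential A (L.foldl (osborneUpdate A) u) = potential A u - dSum A L u
  | [], u => by simp [dSum]
  | m :: L, u => by
    rw [List.foldl_cons, potential_foldl L (osborneUpdate A u m),
      osb_potential hA hdiag hrow hcol u m]
    simp only [dSum]
    ring

lemma imb_foldl_le : ∀ (L : List (Fin n)) (u : Fin n → ℝ),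
    (∑ j, |rowSum A (L.foldl (osborneUpdate A) u) j - colSum A (L.foldl (osborneUpdate A) u) j|)
      ≤ (∑ j ∈ Finset.univ.filter (fun j => j ∉ L), |rowSum A u j - colSum A u j|)
        + sSum A L u
  | [], u => by simp [sSum]
  | m :: L, u => by
    rw [List.foldl_cons]
    refine (imb_foldl_le L (osborneUpdate A u m)).trans ?_
    simp only [sSum]
    have hsub : Finset.univ.filter (fun j => j ∉ L)
        ⊆ insert m (Finset.univ.filter (fun j => j ∉ (m :: L))) := by
      intro j hj
      simp only [Finset.mem_filter, Finset.mem_univ, true_and] at hj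
      by_cases hjm : j = m
      · simp [hjm]
      · simp [Finset.mem_insert, hjm, List.mem_cons, hj]
    have hmem : m ∉ Finset.univ.filter (fun j => j ∉ (m :: L)) := by
      simp [List.mem_cons]
    have step1 : (∑ j ∈ Finset.univ.filter (fun j => j ∉ L),
          |rowSum A (osborneUpdate A u m) j - colSum A (osborneUpdate A u m) j|)
        ≤ ∑ j ∈ insert m (Finset.univ.filter (fun j => j ∉ (m :: L))),
          |rowSum A (osborneUpdate A u m) j - colSum A (osborneUpdate A u m) j| :=
      Finset.sum_le_sum_of_subset_of_nonneg hsub (fun _ _ _ => abs_nonneg _)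
    rw [Finset.sum_insert hmem] at step1
    have hfm : |rowSum A (osborneUpdate A u m) m - colSum A (osborneUpdate A u m) m| = 0 := by
      rw [osb_row_self hA hdiag hrow hcol u m, osb_col_self hA hdiag hrow hcol u m]
      simp
    rw [hfm, zero_add] at step1
    have step2 : (∑ j ∈ Finset.univ.filter (fun j => j ∉ (m :: L)),
          |rowSum A (osborneUpdate A u m) j - colSum A (osborneUpdate A u m) j|)
        ≤ (∑ j ∈ Finset.univ.filter (fun j => j ∉ (m :: L)), |rowSum A u j - colSum A u j|)
          + ∑ j ∈ Finset.univ.filter (fun j => j ∉ (m :: L)),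
              (|rowSum A (osborneUpdate A u m) j - rowSum A u j|
                + |colSum A (osborneUpdate A u m) j - colSum A u j|) := by
      rw [← Finset.sum_add_distrib]
      exact Finset.sum_le_sum fun j _ => abs_sub_le_helper _ _ _ _
    have step3 : (∑ j ∈ Finset.univ.filter (fun j => j ∉ (m :: L)),
          (|rowSum A (osborneUpdate A u m) j - rowSum A u j|
            + |colSum A (osborneUpdate A u m) j - colSum A u j|))
        ≤ |rowSum A u m - colSum A u m| := by
      rw [abs_rc_eq hA hdiag hrow hcol u m]
      refine le_trans ?_ (osb_core_sum hA hdiag hrow hcol u m)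
      refine Finset.sum_le_sum_of_subset_of_nonneg ?_
        (fun _ _ _ => add_nonneg (abs_nonneg _) (abs_nonneg _))
      intro j hj
      simp only [Finset.mem_filter, Finset.mem_univ, true_and, List.mem_cons, not_or] at hj
      exact Finset.mem_erase.2 ⟨hj.1, Finset.mem_univ j⟩
    linarith
end OsbAux
end Frag3

section Frag4
namespace OsbAux
variable {n : ℕ} {A : Matrix (Fin n) (Fin n) ℝ}

lemma toFinset_finRange' : (List.finRange n).toFinset = (Finset.univ : Finset (Fin n)) := by
  ext j; simp [List.mem_finRange]

lemma sum_row_add_col (u : Fin n → ℝ) :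
    ∑ j, (rowSum A u j + colSum A u j) = 2 * potential A u := by
  rw [Finset.sum_add_distrib, ← potential_eq_row, ← potential_eq_col]; ring

variable (hA : ∀ i j, 0 ≤ A i j) (hdiag : ∀ i, A i i = 0)
  (hrow : ∀ j : Fin n, ∃ i, A j i ≠ 0) (hcol : ∀ j : Fin n, ∃ i, A i j ≠ 0)

include hA hdiag hrow hcol

lemma pair_foldl_le : ∀ (L : List (Fin n)) (u : Fin n → ℝ), L.Nodup →
    pSum A L u ≤ (∑ j ∈ L.toFinset, (rowSum A u j + colSum A u j)) + sSum A L u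
  | [], u, _ => by simp [pSum, sSum]
  | m :: L, u, hnd => by
    have hmL : m ∉ L := (List.nodup_cons.1 hnd).1
    have hndL : L.Nodup := (List.nodup_cons.1 hnd).2
    simp only [pSum, sSum, List.toFinset_cons]
    have hmt : m ∉ L.toFinset := by simpa using hmL
    rw [Finset.sum_insert hmt]
    have IH := pair_foldl_le L (osborneUpdate A u m) hndL
    have hstep : (∑ j ∈ L.toFinset, (rowSum A (osborneUpdate A u m) j + colSum A (osborneUpdate A u m) j))
        ≤ (∑ j ∈ L.toFinset, (rowSum A u j + colSum A u j)) + |rowSum A u m - colSum A u m| := by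
      have h1 : (∑ j ∈ L.toFinset, (rowSum A (osborneUpdate A u m) j + colSum A (osborneUpdate A u m) j))
          ≤ (∑ j ∈ L.toFinset, (rowSum A u j + colSum A u j))
            + ∑ j ∈ L.toFinset, (|rowSum A (osborneUpdate A u m) j - rowSum A u j|
                + |colSum A (osborneUpdate A u m) j - colSum A u j|) := by
        rw [← Finset.sum_add_distrib]
        refine Finset.sum_le_sum fun j _ => ?_
        have e1 := le_abs_self (rowSum A (osborneUpdate A u m) j - rowSum A u j)
        have e2 := le_abs_self (colSum A (osborneUpdate A u m) j - colSum A u j)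
        linarith
      have h2 : (∑ j ∈ L.toFinset,
            (|rowSum A (osborneUpdate A u m) j - rowSum A u j|
              + |colSum A (osborneUpdate A u m) j - colSum A u j|))
          ≤ |rowSum A u m - colSum A u m| := by
        rw [abs_rc_eq hA hdiag hrow hcol u m]
        refine le_trans ?_ (osb_core_sum hA hdiag hrow hcol u m)
        refine Finset.sum_le_sum_of_subset_of_nonneg ?_
          (fun _ _ _ => add_nonneg (abs_nonneg _) (abs_nonneg _))
        intro j hj
        refine Finset.mem_erase.2 ⟨?_, Finset.mem_univ j⟩
        rintro rfl
        exact hmL (List.mem_toFinset.1 hj)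
      linarith
    linarith [IH, hstep]

lemma sq_sSum_le : ∀ (L : List (Fin n)) (u : Fin n → ℝ),
    (sSum A L u)^2 ≤ 2 * pSum A L u * dSum A L u
  | [], u => by simp [sSum, pSum, dSum]
  | m :: L, u => by
    simp only [sSum, pSum, dSum]
    set v := osborneUpdate A u m
    set a := |rowSum A u m - colSum A u m| with ha_def
    set d := (Real.sqrt (rowSum A u m) - Real.sqrt (colSum A u m))^2 with hd_def
    set p := rowSum A u m + colSum A u m with hp_def
    have IH := sq_sSum_le L v
    set S' := sSum A L v
    set P' := pSum A L v
    set Δ' := dSum A L v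
    have hr := rowSum_pos hA hrow u m
    have hc := colSum_pos hA hcol u m
    have hr2 : Real.sqrt (rowSum A u m) * Real.sqrt (rowSum A u m) = rowSum A u m :=
      Real.mul_self_sqrt hr.le
    have hc2 : Real.sqrt (colSum A u m) * Real.sqrt (colSum A u m) = colSum A u m :=
      Real.mul_self_sqrt hc.le
    have ha2 : a^2 ≤ 2 * p * d := by
      rw [ha_def, abs_rc_eq hA hdiag hrow hcol u m, mul_pow, sq_abs]
      have hsum : (Real.sqrt (rowSum A u m) + Real.sqrt (colSum A u m))^2
          ≤ 2 * p := by nlinarith [sq_nonneg (Real.sqrt (rowSum A u m) - Real.sqrt (colSum A u m))]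
      calc (Real.sqrt (rowSum A u m) - Real.sqrt (colSum A u m))^2
            * (Real.sqrt (rowSum A u m) + Real.sqrt (colSum A u m))^2
          ≤ (Real.sqrt (rowSum A u m) - Real.sqrt (colSum A u m))^2 * (2 * p) :=
            mul_le_mul_of_nonneg_left hsum (sq_nonneg _)
        _ = 2 * p * d := by rw [hd_def]; ring
    have ha : 0 ≤ a := abs_nonneg _
    have hS' : 0 ≤ S' := sSum_nonneg L v
    have hP' : 0 ≤ P' := pSum_nonneg hA L v
    have hΔ' : 0 ≤ Δ' := dSum_nonneg L v
    have hd : 0 ≤ d := sq_nonneg _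
    have hp : 0 ≤ p := add_nonneg (rowSum_nonneg hA u m) (colSum_nonneg hA u m)
    have h4 : a^2 * S'^2 ≤ (2*p*d) * (2*P'*Δ') :=
      mul_le_mul ha2 IH (sq_nonneg _) (by positivity)
    have h5 : a * S' ≤ p * Δ' + P' * d := by
      nlinarith [sq_nonneg (p*Δ' - P'*d), h4, mul_nonneg ha hS',
        mul_nonneg (mul_nonneg hp hΔ') (mul_nonneg hP' hd),
        mul_nonneg hp hΔ', mul_nonneg hP' hd]
    nlinarith [ha2, IH, h5]

lemma cycle_potential (u : Fin n → ℝ) :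
    potential A (osborneCycle A u) = potential A u - dSum A (List.finRange n) u :=
  potential_foldl hA hdiag hrow hcol (List.finRange n) u

lemma cycle_key (u : Fin n → ℝ) :
    (∑ j, |rowSum A (osborneCycle A u) j - colSum A (osborneCycle A u) j|)^2
      ≤ 16 * potential A u * (potential A u - potential A (osborneCycle A u)) := by
  have hcp := cycle_potential hA hdiag hrow hcol u
  have hΔeq : potential A u - potential A (osborneCycle A u) = dSum A (List.finRange n) u := by
    linarith
  rw [hΔeq]
  set L := List.finRange n
  set S := sSum A L u
  set Δ := dSum A L u
  set P := pSum A L u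
  set φ := potential A u with hφ_def
  have hfil : (Finset.univ.filter (fun j : Fin n => j ∉ L)) = ∅ := by
    ext j; simp [L, List.mem_finRange]
  have hD : (∑ j, |rowSum A (osborneCycle A u) j - colSum A (osborneCycle A u) j|) ≤ S := by
    have := imb_foldl_le hA hdiag hrow hcol L u
    rw [hfil, Finset.sum_empty, zero_add] at this
    exact this
  have hDnn : 0 ≤ (∑ j, |rowSum A (osborneCycle A u) j - colSum A (osborneCycle A u) j|) :=
    Finset.sum_nonneg fun j _ => abs_nonneg _
  have hS2 : S^2 ≤ 2 * P * Δ := sq_sSum_le hA hdiag hrow hcol L u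
  have hP : P ≤ 2 * φ + S := by
    have := pair_foldl_le hA hdiag hrow hcol L u (List.nodup_finRange n)
    rwa [toFinset_finRange', sum_row_add_col] at this
  have hΔφ : Δ ≤ φ := by
    have h0 := potential_nonneg hA (osborneCycle A u)
    linarith [hcp]
  have hSnn : 0 ≤ S := sSum_nonneg L u
  have hΔnn : 0 ≤ Δ := dSum_nonneg L u
  have hφnn : 0 ≤ φ := potential_nonneg hA u
  have hD2 : (∑ j, |rowSum A (osborneCycle A u) j - colSum A (osborneCycle A u) j|)^2 ≤ S^2 :=
    pow_le_pow_left₀ hDnn hD 2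
  have hS2' : S^2 ≤ 2 * (2*φ + S) * Δ := by
    refine hS2.trans ?_
    have := mul_le_mul_of_nonneg_right (mul_le_mul_of_nonneg_left hP (by norm_num : (0:ℝ) ≤ 2)) hΔnn
    linarith
  nlinarith [sq_nonneg (S - 2*Δ), mul_le_mul_of_nonneg_right hΔφ hΔnn]

end OsbAux
end Frag4

section Main
open OsbAux

lemma osborne_numeric_endgame (Φ D : ℕ → ℝ) (eps' : ℝ) (K' : ℕ)
    (hΦpos : ∀ k, 0 < Φ k) (hΦmono : ∀ k, Φ (k+1) ≤ Φ k)
    (hkey : ∀ k, (D (k+1))^2 ≤ 16 * Φ k * (Φ k - Φ (k+1)))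
    (hDle : ∀ k, D k ≤ 2 * Φ k)
    (heps0 : 0 < eps') (heps1 : eps' < 1) (hK : 1 ≤ K')
    (hcon : ∀ t, 1 ≤ t → t ≤ K' →
      (eps' + 10 * Φ 0 / (eps' * K' * Φ K')) * Φ t < D t) :
    False := by
  have hK0 : (0:ℝ) < (K' : ℝ) := by exact_mod_cast Nat.lt_of_lt_of_le Nat.zero_lt_one hK
  have hp0 : 0 < Φ 0 := hΦpos 0
  have hpK : 0 < Φ K' := hΦpos K'
  have hdenom : 0 < eps' * (K':ℝ) * Φ K' := by positivity
  set B : ℝ := 10 * Φ 0 / (eps' * K' * Φ K') with hBdef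
  have hBpos : 0 < B := by positivity
  have hB2 : B < 2 := by
    have h1 := hcon K' hK le_rfl
    have h2 := hDle K'
    have h4 : (eps' + B) * Φ K' < 2 * Φ K' := h1.trans_le h2
    have h5 := lt_of_mul_lt_mul_right h4 hpK.le
    linarith
  have h10 : 10 * Φ 0 < 2 * (eps' * K' * Φ K') := by
    rw [hBdef] at hB2
    exact (div_lt_iff₀ hdenom).1 hB2
  have h5 : 5 * Φ 0 < (K':ℝ) * Φ K' := by
    nlinarith [mul_pos hK0 hpK]
  set x : ℝ := 5 * Φ 0 / (2 * K' * Φ K') with hxdef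
  have hx0 : 0 < x := by positivity
  have hx : x < 1/2 := by
    rw [hxdef, div_lt_iff₀ (by positivity)]
    nlinarith
  have hxB : 4 * (eps' * B) = 16 * x := by
    rw [hBdef, hxdef]
    field_simp
    ring
  have hstep : ∀ t, t < K' → (1 + 2*x/3) * Φ (t+1) ≤ Φ t := by
    intro t ht
    have h1 := hcon (t+1) (by omega) (by omega)
    have hq := hΦpos (t+1)
    have h2 : ((eps' + B) * Φ (t+1))^2 ≤ (D (t+1))^2 :=
      pow_le_pow_left₀ (by positivity) h1.le 2
    have h3 : 4 * (eps' * B) ≤ (eps' + B)^2 := by nlinarith [sq_nonneg (eps' - B)]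
    have h4 := hkey t
    have h6 : 16 * x * (Φ (t+1))^2 ≤ 16 * Φ t * (Φ t - Φ (t+1)) := by
      calc 16 * x * (Φ (t+1))^2 = 4 * (eps' * B) * (Φ (t+1))^2 := by rw [hxB]
        _ ≤ (eps' + B)^2 * (Φ (t+1))^2 := mul_le_mul_of_nonneg_right h3 (sq_nonneg _)
        _ = ((eps' + B) * Φ (t+1))^2 := by ring
        _ ≤ _ := h2.trans h4
    have h7 : x * (Φ (t+1))^2 ≤ Φ t * (Φ t - Φ (t+1)) := by linarith
    have h8 := hΦmono t
    nlinarith [mul_pos hq hq, hΦpos t]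
  have hchain : ∀ t, t ≤ K' → (1 + 2*x/3)^t * Φ K' ≤ Φ (K' - t) := by
    intro t
    induction t with
    | zero => intro _; simp
    | succ s ih =>
      intro hs
      have h1 := ih (by omega)
      have h3 := hstep (K' - (s+1)) (by omega)
      have h4 : K' - (s+1) + 1 = K' - s := by omega
      rw [h4] at h3
      calc (1 + 2*x/3)^(s+1) * Φ K'
          = (1 + 2*x/3) * ((1 + 2*x/3)^s * Φ K') := by ring
        _ ≤ (1 + 2*x/3) * Φ (K' - s) := mul_le_mul_of_nonneg_left h1 (by linarith)
        _ ≤ _ := h3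
  have hbern : 1 + (K':ℝ) * (2*x/3) ≤ (1 + 2*x/3)^K' :=
    one_add_mul_le_pow (by linarith) K'
  have hfinal : (1 + (K':ℝ) * (2*x/3)) * Φ K' ≤ Φ 0 := by
    have h1 := hchain K' le_rfl
    rw [Nat.sub_self] at h1
    exact le_trans (mul_le_mul_of_nonneg_right hbern hpK.le) h1
  have hval : (K':ℝ) * (2*x/3) * Φ K' = 5 * Φ 0 / 3 := by
    rw [hxdef]
    field_simp
  nlinarith [hfinal, hval, hpK, hp0]

/-- Key one-batch bound: among the first K' cycles of Osborne's algorithm, some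
end-of-cycle iterate u_t has normalized l1 imbalance at most
eps' + 10 φ(u_0) / (eps' K' φ(u_{K'})). -/
theorem osborne_one_batch_bound (n : ℕ) (A : Matrix (Fin n) (Fin n) ℝ)
    (hA : ∀ i j, 0 ≤ A i j) (hdiag : ∀ i, A i i = 0)
    (hrow : ∀ j : Fin n, ∃ i, A j i ≠ 0) (hcol : ∀ j : Fin n, ∃ i, A i j ≠ 0)
    (hbal : ∃ u : Fin n → ℝ, ∀ i, rowSum A u i = colSum A u i)
    (u0 : Fin n → ℝ) (eps' : ℝ) (heps0 : 0 < eps') (heps1 : eps' < 1)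
    (K' : ℕ) (hK : 1 ≤ K') :
    ∃ t ∈ Finset.Icc 1 K',
      (∑ j, |rowSum A (osborneIter A u0 t) j - colSum A (osborneIter A u0 t) j|)
          / potential A (osborneIter A u0 t)
        ≤ eps' + 10 * potential A u0
            / (eps' * K' * potential A (osborneIter A u0 K')) := by
  rcases Nat.eq_zero_or_pos n with hn | hn
  · subst hn
    refine ⟨1, Finset.mem_Icc.2 ⟨le_rfl, hK⟩, ?_⟩
    simp [potential]
    positivity
  · by_contra hcon
    push_neg at hcon
    have hΦpos : ∀ k, 0 < potential A (osborneIter A u0 k) :=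
      fun k => potential_pos hA hrow hn _
    have hiter : ∀ k, osborneIter A u0 (k+1) = osborneCycle A (osborneIter A u0 k) :=
      fun k => Function.iterate_succ_apply' _ _ _
    have hΦmono : ∀ k, potential A (osborneIter A u0 (k+1)) ≤ potential A (osborneIter A u0 k) := by
      intro k
      rw [hiter k, cycle_potential hA hdiag hrow hcol]
      linarith [dSum_nonneg (A := A) (List.finRange n) (osborneIter A u0 k)]
    have hkey : ∀ k,
        (∑ j, |rowSum A (osborneIter A u0 (k+1)) j - colSum A (osborneIter A u0 (k+1)) j|)^2
          ≤ 16 * potential A (osborneIter A u0 k)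
              * (potential A (osborneIter A u0 k) - potential A (osborneIter A u0 (k+1))) := by
      intro k
      rw [hiter k]
      exact cycle_key hA hdiag hrow hcol (osborneIter A u0 k)
    have hDle : ∀ k,
        (∑ j, |rowSum A (osborneIter A u0 k) j - colSum A (osborneIter A u0 k) j|)
          ≤ 2 * potential A (osborneIter A u0 k) := by
      intro k
      rw [← sum_row_add_col]
      refine Finset.sum_le_sum fun j _ => (abs_sub _ _).trans ?_
      rw [abs_of_nonneg (rowSum_nonneg hA _ _), abs_of_nonneg (colSum_nonneg hA _ _)]
    have hcon' : ∀ t, 1 ≤ t → t ≤ K' →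
        (eps' + 10 * potential A (osborneIter A u0 0)
            / (eps' * K' * potential A (osborneIter A u0 K')))
          * potential A (osborneIter A u0 t)
        < (∑ j, |rowSum A (osborneIter A u0 t) j - colSum A (osborneIter A u0 t) j|) := by
      intro t h1 h2
      have h := hcon t (Finset.mem_Icc.2 ⟨h1, h2⟩)
      exact (lt_div_iff₀ (hΦpos t)).1 h
    exact osborne_numeric_endgame
      (fun k => potential A (osborneIter A u0 k))
      (fun k => ∑ j, |rowSum A (osborneIter A u0 k) j - colSum A (osborneIter A u0 k) j|)
      eps' K' hΦpos hΦmono hkey hDle heps0 heps1 hK hcon'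
end Main
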